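/- Let H be a real n_r × n matrix with nonnegative entries, α ∈ [0,1]^n ordered descending, and let X be any random vector with values in [0,1]^n and E[X] = α. Then the trace of the covariance matrix of HX satisfies tr(Cov(HX)) ≤ Σ_{i=1}^n Σ_{j=1}^n g_{ij} (min(α_i,α_j) − α_i α_j), where g_{ij} = h_iᵀ h_j are the entries of the Gram matrix HᵀH, and equality is attained by the maximally correlated binary distribution with marginal means α. -/

import Mathlib

open MeasureTheory

/-- `stepVal α k` is the auxiliary sequence `1, α₀, α₁, …, α_{n-1}, 0, 0, …`. -/
noncomputable def stepVal (n : ℕ) (α : Fin n → ℝ) (k : ℕ) : ℝ :=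
  if k = 0 then 1 else if h : k - 1 < n then α ⟨k - 1, h⟩ else 0

/-- The mass point `e₁ + ⋯ + e_k` (the first `k` coordinates equal `1`). -/
def massPoint (n : ℕ) (k : ℕ) : Fin n → ℝ := fun i => if (i : ℕ) < k then 1 else 0

lemma stepVal_zero (n : ℕ) (α : Fin n → ℝ) : stepVal n α 0 = 1 := by simp [stepVal]

lemma stepVal_fin (n : ℕ) (α : Fin n → ℝ) (i : Fin n) : stepVal n α ((i : ℕ) + 1) = α i := by
  simp [stepVal, i.isLt]

lemma stepVal_top (n : ℕ) (α : Fin n → ℝ) : stepVal n α (n + 1) = 0 := by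
  simp [stepVal]

lemma stepVal_antitone (n : ℕ) (α : Fin n → ℝ) (hα01 : ∀ i, α i ∈ Set.Icc (0 : ℝ) 1)
    (hmono : Antitone α) (m : ℕ) : stepVal n α (m + 1) ≤ stepVal n α m := by
  rcases m with _ | k
  · simp only [stepVal, if_pos rfl, if_neg (Nat.succ_ne_zero 0)]
    split
    · exact (hα01 _).2
    · exact zero_le_one
  · simp only [stepVal, if_neg (Nat.succ_ne_zero _), Nat.add_sub_cancel]
    by_cases h1 : k + 1 < n
    · have h0 : k < n := Nat.lt_of_succ_lt h1
      rw [dif_pos h1, dif_pos h0]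
      exact hmono (by simp [Fin.le_def])
    · rw [dif_neg h1]
      split
      · exact (hα01 _).1
      · exact le_refl 0

lemma tele (s : ℕ → ℝ) (a : ℕ) : ∀ b, a ≤ b →
    ∑ m ∈ Finset.Ico a b, (s m - s (m + 1)) = s a - s b := by
  intro b
  induction b with
  | zero => intro h; simp [Nat.le_zero.mp h]
  | succ b ih =>
    intro h
    rcases Nat.lt_or_ge a (b+1) with h' | h'
    · have hab : a ≤ b := Nat.lt_succ_iff.mp h'
      rw [Finset.sum_Ico_succ_top hab, ih hab]; ring
    · have : a = b + 1 := le_antisymm h h'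
      simp [this]

lemma keyAux (n : ℕ) (α : Fin n → ℝ) (i j : Fin n) (hij : (i : ℕ) ≤ (j : ℕ)) :
    ∑ m ∈ Finset.range (n + 1), (stepVal n α m - stepVal n α (m + 1)) *
      ((massPoint n m i - α i) * (massPoint n m j - α j)) = α j - α i * α j := by
  have hij1 : (i : ℕ) + 1 ≤ (j : ℕ) + 1 := Nat.succ_le_succ hij
  have hj1 : (j : ℕ) + 1 ≤ n + 1 := Nat.succ_le_succ j.isLt.le
  have hi1 : (i : ℕ) + 1 ≤ n + 1 := le_trans hij1 hj1
  rw [Finset.range_eq_Ico, ← Finset.sum_Ico_consecutive _ (Nat.zero_le ((i : ℕ) + 1)) hi1,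
    ← Finset.sum_Ico_consecutive _ hij1 hj1]
  have e1 : ∀ m ∈ Finset.Ico 0 ((i : ℕ) + 1), (stepVal n α m - stepVal n α (m + 1)) *
      ((massPoint n m i - α i) * (massPoint n m j - α j)) =
      (stepVal n α m - stepVal n α (m + 1)) * ((0 - α i) * (0 - α j)) := by
    intro m hm
    have hmi : ¬ ((i : ℕ) < m) := by have := (Finset.mem_Ico.mp hm).2; omega
    have hmj : ¬ ((j : ℕ) < m) := by have := (Finset.mem_Ico.mp hm).2; omega
    simp [massPoint, hmi, hmj]
  have e2 : ∀ m ∈ Finset.Ico ((i : ℕ) + 1) ((j : ℕ) + 1),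
      (stepVal n α m - stepVal n α (m + 1)) *
      ((massPoint n m i - α i) * (massPoint n m j - α j)) =
      (stepVal n α m - stepVal n α (m + 1)) * ((1 - α i) * (0 - α j)) := by
    intro m hm
    have hmi : (i : ℕ) < m := by have := (Finset.mem_Ico.mp hm).1; omega
    have hmj : ¬ ((j : ℕ) < m) := by have := (Finset.mem_Ico.mp hm).2; omega
    simp [massPoint, hmi, hmj]
  have e3 : ∀ m ∈ Finset.Ico ((j : ℕ) + 1) (n + 1),
      (stepVal n α m - stepVal n α (m + 1)) *
      ((massPoint n m i - α i) * (massPoint n m j - α j)) =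
      (stepVal n α m - stepVal n α (m + 1)) * ((1 - α i) * (1 - α j)) := by
    intro m hm
    have hmi : (i : ℕ) < m := by have := (Finset.mem_Ico.mp hm).1; omega
    have hmj : (j : ℕ) < m := by have := (Finset.mem_Ico.mp hm).1; omega
    simp [massPoint, hmi, hmj]
  rw [Finset.sum_congr rfl e1, Finset.sum_congr rfl e2, Finset.sum_congr rfl e3,
    ← Finset.sum_mul, ← Finset.sum_mul, ← Finset.sum_mul,
    tele _ _ _ (Nat.zero_le _), tele _ _ _ hij1, tele _ _ _ hj1,
    stepVal_zero, stepVal_fin, stepVal_fin, stepVal_top]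
  ring

lemma keySum (n : ℕ) (α : Fin n → ℝ) (hmono : Antitone α) (i j : Fin n) :
    ∑ m ∈ Finset.range (n + 1), (stepVal n α m - stepVal n α (m + 1)) *
      ((massPoint n m i - α i) * (massPoint n m j - α j)) =
      min (α i) (α j) - α i * α j := by
  rcases le_total (i : ℕ) (j : ℕ) with h | h
  · rw [keyAux n α i j h, min_eq_right (hmono (show i ≤ j from h))]
  · have e : ∀ m ∈ Finset.range (n + 1), (stepVal n α m - stepVal n α (m + 1)) *
        ((massPoint n m i - α i) * (massPoint n m j - α j)) =
        (stepVal n α m - stepVal n α (m + 1)) *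
        ((massPoint n m j - α j) * (massPoint n m i - α i)) := by
      intro m _; ring
    rw [Finset.sum_congr rfl e, keyAux n α j i h, min_eq_left (hmono (show j ≤ i from h))]
    ring

lemma swap3' {A B C : Type*} (s1 : Finset A) (s2 : Finset B) (s3 : Finset C)
    (f : A → B → C → ℝ) :
    ∑ a ∈ s1, ∑ b ∈ s2, ∑ c ∈ s3, f a b c = ∑ b ∈ s2, ∑ c ∈ s3, ∑ a ∈ s1, f a b c := by
  rw [Finset.sum_comm]; exact Finset.sum_congr rfl fun b _ => Finset.sum_comm

/-- The maximally correlated binary distribution with marginal means `α`. -/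
noncomputable def maxCorrDist (n : ℕ) (α : Fin n → ℝ) : Measure (Fin n → ℝ) :=
  ∑ k ∈ Finset.range (n + 1),
    ENNReal.ofReal (stepVal n α k - stepVal n α (k + 1)) • Measure.dirac (massPoint n k)

theorem trace_covariance_max
    {Ω : Type*} [MeasurableSpace Ω] (μ : Measure Ω) [IsProbabilityMeasure μ]
    (nr n : ℕ) (H : Matrix (Fin nr) (Fin n) ℝ) (hH : ∀ k i, 0 ≤ H k i)
    (α : Fin n → ℝ) (hα01 : ∀ i, α i ∈ Set.Icc (0 : ℝ) 1) (hmono : Antitone α)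
    (X : Ω → Fin n → ℝ) (hXmeas : Measurable X)
    (hX01 : ∀ᵐ ω ∂μ, X ω ∈ Set.Icc (0 : Fin n → ℝ) 1)
    (hmean : ∀ i, ∫ ω, X ω i ∂μ = α i) :
    (∑ k, ∫ ω, (H.mulVec (X ω) k - H.mulVec α k) ^ 2 ∂μ) ≤
      ∑ i, ∑ j, (∑ k, H k i * H k j) * (min (α i) (α j) - α i * α j) ∧
    (∑ k, ∫ x, (H.mulVec x k - H.mulVec α k) ^ 2 ∂(maxCorrDist n α)) =
      ∑ i, ∑ j, (∑ k, H k i * H k j) * (min (α i) (α j) - α i * α j) := by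
  have hrw : ∀ (v : Fin n → ℝ) (k : Fin nr),
      H.mulVec v k - H.mulVec α k = ∑ i, H k i * (v i - α i) := by
    intro v k
    simp [Matrix.mulVec, dotProduct, mul_sub, Finset.sum_sub_distrib]
  have hXb : ∀ᵐ ω ∂μ, ∀ i, X ω i ∈ Set.Icc (0:ℝ) 1 := by
    filter_upwards [hX01] with ω hω i
    exact ⟨hω.1 i, hω.2 i⟩
  have hXimeas : ∀ i, Measurable fun ω => X ω i - α i :=
    fun i => ((measurable_pi_apply i).comp hXmeas).sub measurable_const
  have habs : ∀ (x a : ℝ), x ∈ Set.Icc (0:ℝ) 1 → a ∈ Set.Icc (0:ℝ) 1 → |x - a| ≤ 1 := by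
    intro x a hx ha
    rw [abs_le]
    constructor <;> nlinarith [hx.1, hx.2, ha.1, ha.2]
  have hXi : ∀ i, Integrable (fun ω => X ω i - α i) μ := by
    intro i
    refine Integrable.mono' (integrable_const 1) (hXimeas i).aestronglyMeasurable ?_
    filter_upwards [hXb] with ω hω
    simpa [Real.norm_eq_abs] using habs _ _ (hω i) (hα01 i)
  have hprod : ∀ i j, Integrable (fun ω => (X ω i - α i) * (X ω j - α j)) μ := by
    intro i j
    refine Integrable.mono' (integrable_const 1)
      ((hXimeas i).mul (hXimeas j)).aestronglyMeasurable ?_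
    filter_upwards [hXb] with ω hω
    rw [Real.norm_eq_abs, abs_mul]
    calc |X ω i - α i| * |X ω j - α j| ≤ 1 * 1 :=
          mul_le_mul (habs _ _ (hω i) (hα01 i)) (habs _ _ (hω j) (hα01 j))
            (abs_nonneg _) zero_le_one
      _ = 1 := one_mul 1
  have hXX : ∀ i j, Integrable (fun ω => X ω i * X ω j) μ := by
    intro i j
    refine Integrable.mono' (integrable_const 1)
      (((measurable_pi_apply i).comp hXmeas).mul
        ((measurable_pi_apply j).comp hXmeas)).aestronglyMeasurable ?_
    filter_upwards [hXb] with ω hω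
    rw [Real.norm_eq_abs, abs_mul]
    calc |X ω i| * |X ω j| ≤ 1 * 1 := by
          have h1 : |X ω i| ≤ 1 := abs_le.mpr ⟨by linarith [(hω i).1], (hω i).2⟩
          have h2 : |X ω j| ≤ 1 := abs_le.mpr ⟨by linarith [(hω j).1], (hω j).2⟩
          exact mul_le_mul h1 h2 (abs_nonneg _) zero_le_one
      _ = 1 := one_mul 1
  have hXint : ∀ i, Integrable (fun ω => X ω i) μ := by
    intro i
    have e : (fun ω => X ω i) = fun ω => (X ω i - α i) + α i := by funext ω; ring
    rw [e]
    exact (hXi i).add (integrable_const (α i))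
  have hcov : ∀ i j, (∫ ω, (X ω i - α i) * (X ω j - α j) ∂μ) ≤
      min (α i) (α j) - α i * α j := by
    intro i j
    have Ib : Integrable (fun ω => α j * X ω i) μ := (hXint i).const_mul (α j)
    have Ic : Integrable (fun ω => α i * X ω j) μ := (hXint j).const_mul (α i)
    have Ia : Integrable (fun ω => X ω i * X ω j - α j * X ω i) μ := by
      exact (hXX i j).sub Ib
    have Id : Integrable (fun ω => α i * X ω j - α i * α j) μ := by
      exact Ic.sub (integrable_const _)
    have e : (fun ω => (X ω i - α i) * (X ω j - α j)) =
        fun ω => (X ω i * X ω j - α j * X ω i) - (α i * X ω j - α i * α j) := by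
      funext ω; ring
    rw [e, integral_sub Ia Id, integral_sub (hXX i j) Ib,
      integral_sub Ic (integrable_const _),
      integral_const_mul, integral_const_mul, hmean i, hmean j, integral_const]
    simp only [measure_univ, probReal_univ, ENNReal.toReal_one, smul_eq_mul, one_mul]
    have hle : (∫ ω, X ω i * X ω j ∂μ) ≤ min (α i) (α j) := by
      refine le_min ?_ ?_
      · rw [← hmean i]
        refine integral_mono_ae (hXX i j) (hXint i) ?_
        filter_upwards [hXb] with ω hω
        nlinarith [(hω i).1, (hω i).2, (hω j).1, (hω j).2]
      · rw [← hmean j]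
        refine integral_mono_ae (hXX i j) (hXint j) ?_
        filter_upwards [hXb] with ω hω
        nlinarith [(hω i).1, (hω i).2, (hω j).1, (hω j).2]
    have h1 := min_le_left (α i) (α j)
    have h2 := min_le_right (α i) (α j)
    nlinarith [hle]
  constructor
  · -- inequality
    have step : ∀ k : Fin nr, (∫ ω, (H.mulVec (X ω) k - H.mulVec α k) ^ 2 ∂μ) =
        ∑ i, ∑ j, (H k i * H k j) * ∫ ω, (X ω i - α i) * (X ω j - α j) ∂μ := by
      intro k
      have e1 : ∀ ω, (H.mulVec (X ω) k - H.mulVec α k) ^ 2 =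
          ∑ i, ∑ j, (H k i * H k j) * ((X ω i - α i) * (X ω j - α j)) := by
        intro ω
        rw [hrw, sq, Finset.sum_mul_sum]
        exact Finset.sum_congr rfl fun i _ => Finset.sum_congr rfl fun j _ => by ring
      simp_rw [e1]
      rw [integral_finset_sum _ (fun i _ => integrable_finset_sum _
        (fun j _ => ((hprod i j).const_mul _)))]
      exact Finset.sum_congr rfl fun i _ => by
        rw [integral_finset_sum _ (fun j _ => ((hprod i j).const_mul _))]
        exact Finset.sum_congr rfl fun j _ => integral_const_mul _ _
    calc (∑ k, ∫ ω, (H.mulVec (X ω) k - H.mulVec α k) ^ 2 ∂μ)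
        = ∑ k, ∑ i, ∑ j, (H k i * H k j) *
            ∫ ω, (X ω i - α i) * (X ω j - α j) ∂μ := Finset.sum_congr rfl fun k _ => step k
      _ ≤ ∑ k, ∑ i, ∑ j, (H k i * H k j) * (min (α i) (α j) - α i * α j) := by
          refine Finset.sum_le_sum fun k _ => Finset.sum_le_sum fun i _ =>
            Finset.sum_le_sum fun j _ => ?_
          exact mul_le_mul_of_nonneg_left (hcov i j)
            (mul_nonneg (hH k i) (hH k j))
      _ = ∑ i, ∑ j, (∑ k, H k i * H k j) * (min (α i) (α j) - α i * α j) := by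
          rw [swap3']
          exact Finset.sum_congr rfl fun i _ => Finset.sum_congr rfl fun j _ =>
            (Finset.sum_mul _ _ _).symm
  · -- equality
    have hfmeas : ∀ k : Fin nr,
        Measurable fun x : Fin n → ℝ => (H.mulVec x k - H.mulVec α k) ^ 2 := by
      intro k
      have hmv : Measurable fun x : Fin n → ℝ => H.mulVec x k := by
        simp only [Matrix.mulVec, dotProduct]
        exact Finset.measurable_sum _ fun i _ => (measurable_pi_apply i).const_mul _
      exact (hmv.sub measurable_const).pow_const 2
    have hint : ∀ (k : Fin nr), ∀ m ∈ Finset.range (n + 1),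
        Integrable (fun x => (H.mulVec x k - H.mulVec α k) ^ 2)
          (ENNReal.ofReal (stepVal n α m - stepVal n α (m + 1)) •
            Measure.dirac (massPoint n m)) := by
      intro k m _
      refine Integrable.smul_measure ?_ ENNReal.ofReal_ne_top
      refine ⟨(hfmeas k).aestronglyMeasurable, ?_⟩
      rw [HasFiniteIntegral, lintegral_dirac' _ (hfmeas k).enorm]
      exact enorm_lt_top
    have hcomp : ∀ k : Fin nr,
        (∫ x, (H.mulVec x k - H.mulVec α k) ^ 2 ∂(maxCorrDist n α)) =
        ∑ m ∈ Finset.range (n + 1), (stepVal n α m - stepVal n α (m + 1)) *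
          (H.mulVec (massPoint n m) k - H.mulVec α k) ^ 2 := by
      intro k
      rw [maxCorrDist, integral_finset_sum_measure (hint k)]
      refine Finset.sum_congr rfl fun m hm => ?_
      rw [integral_smul_measure, integral_dirac' _ _ (hfmeas k).stronglyMeasurable,
        ENNReal.toReal_ofReal
          (sub_nonneg.mpr (stepVal_antitone n α hα01 hmono m))]
      rfl
    have expand : ∀ (k : Fin nr) (m : ℕ),
        (H.mulVec (massPoint n m) k - H.mulVec α k) ^ 2 =
        ∑ i, ∑ j, (H k i * (massPoint n m i - α i)) * (H k j * (massPoint n m j - α j)) := by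
      intro k m
      rw [hrw, sq, Finset.sum_mul_sum]
    calc (∑ k, ∫ x, (H.mulVec x k - H.mulVec α k) ^ 2 ∂(maxCorrDist n α))
        = ∑ k, ∑ m ∈ Finset.range (n + 1), ∑ i, ∑ j,
            (stepVal n α m - stepVal n α (m + 1)) *
            ((H k i * (massPoint n m i - α i)) * (H k j * (massPoint n m j - α j))) := by
          refine Finset.sum_congr rfl fun k _ => ?_
          rw [hcomp k]
          refine Finset.sum_congr rfl fun m _ => ?_
          rw [expand k m, Finset.mul_sum]
          exact Finset.sum_congr rfl fun i _ => Finset.mul_sum _ _ _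
      _ = ∑ i, ∑ j, ∑ k, ∑ m ∈ Finset.range (n + 1),
            (stepVal n α m - stepVal n α (m + 1)) *
            ((H k i * (massPoint n m i - α i)) * (H k j * (massPoint n m j - α j))) := by
          rw [Finset.sum_congr rfl fun k (_ : k ∈ Finset.univ) => swap3' _ _ _ _, swap3']
      _ = ∑ i, ∑ j, (∑ k, H k i * H k j) * (min (α i) (α j) - α i * α j) := by
          refine Finset.sum_congr rfl fun i _ => Finset.sum_congr rfl fun j _ => ?_
          rw [← keySum n α hmono i j, Finset.sum_mul_sum]
          refine Finset.sum_congr rfl fun k _ => Finset.sum_congr rfl fun m _ => ?_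
          ring
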